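/- Let λ = 0, β > 0, and let {f_{i,±}} satisfy the conservation law (1/N)Σ f_{j,±}(t) = ρ_± for all t. Then the system reduces to f'_{i,±} = Nβ(ρ_± f_{i,0} - ρ₀ f_{i,±}) with ρ₀ = 1 - ρ₊ - ρ₋, and each f_{i,±}(t) converges to ρ_± as t → ∞ at exponential rate Nβρ₀; explicitly, setting h_i = f_{i,+} + f_{i,-} and g_i = f_{i,+} - f_{i,-}, one has h_i(t) = ρ₊+ρ₋ + (h_i(0)-(ρ₊+ρ₋))e^{-Nβt} and g_i(t) = (ρ₊-ρ₋) + (g_i(0)-(ρ₊-ρ₋) - (ρ₊-ρ₋)(h_i(0)-(ρ₊+ρ₋))/(1-ρ₀)) e^{-Nβρ₀ t} + ((ρ₊-ρ₋)(h_i(0)-(ρ₊+ρ₋))/(1-ρ₀)) e^{-Nβt}. -/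

import Mathlib

open Finset Filter

private lemma expDeriv' (a t : ℝ) :
    HasDerivAt (fun s : ℝ => Real.exp (a * s)) (a * Real.exp (a * t)) t := by
  have h := ((hasDerivAt_id t).const_mul a).exp
  simpa [mul_comm] using h

private lemma const_of_deriv0' (F : ℝ → ℝ) (h : ∀ t ≥ (0:ℝ), HasDerivAt F 0 t) :
    ∀ t ≥ (0:ℝ), F t = F 0 := by
  intro t ht
  have hcont : ContinuousOn F (Set.Icc 0 t) := fun x hx =>
    (h x hx.1).continuousAt.continuousWithinAt
  have hderiv : ∀ x ∈ Set.Ico (0:ℝ) t, HasDerivWithinAt F 0 (Set.Ici x) x := fun x hx =>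
    (h x hx.1).hasDerivWithinAt
  exact constant_of_has_deriv_right_zero hcont hderiv t ⟨ht, le_refl t⟩

/-- With λ = 0 and β > 0, the N-neighborhood system reduces to a linear system,
solves explicitly in the variables h_i = f_{i,+}+f_{i,-}, g_i = f_{i,+}-f_{i,-},
and converges exponentially (rate Nβρ₀) to the homogeneous equilibrium. -/
theorem stmt_7
    (N : ℕ) (hN : 2 ≤ N) (β ρp ρm : ℝ) (hβ : 0 < β)
    (hρp : ρp ∈ Set.Ioo (0:ℝ) 1) (hρm : ρm ∈ Set.Ioo (0:ℝ) 1)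
    (ρ0 : ℝ) (hρ0 : ρ0 = 1 - ρp - ρm) (hρ0pos : 0 < ρ0)
    (fp fm : Fin N → ℝ → ℝ)
    (f0 : Fin N → ℝ → ℝ) (hf0 : ∀ i t, f0 i t = 1 - fp i t - fm i t)
    (hp : ∀ i, ∀ t ≥ (0:ℝ), HasDerivAt (fp i)
      (f0 i t * ∑ j ∈ univ.erase i, β * fp j t
        - fp i t * β * ∑ j ∈ univ.erase i, f0 j t) t)
    (hm : ∀ i, ∀ t ≥ (0:ℝ), HasDerivAt (fm i)
      (f0 i t * ∑ j ∈ univ.erase i, β * fm j t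
        - fm i t * β * ∑ j ∈ univ.erase i, f0 j t) t)
    (hconsp : ∀ t ≥ (0:ℝ), (1 / (N:ℝ)) * ∑ j, fp j t = ρp)
    (hconsm : ∀ t ≥ (0:ℝ), (1 / (N:ℝ)) * ∑ j, fm j t = ρm) :
    (∀ i, ∀ t ≥ (0:ℝ),
      HasDerivAt (fp i) ((N:ℝ) * β * (ρp * f0 i t - ρ0 * fp i t)) t ∧
      HasDerivAt (fm i) ((N:ℝ) * β * (ρm * f0 i t - ρ0 * fm i t)) t) ∧
    (∀ i, ∀ t ≥ (0:ℝ),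
      fp i t + fm i t
        = ρp + ρm + (fp i 0 + fm i 0 - (ρp + ρm)) * Real.exp (-(N:ℝ) * β * t) ∧
      fp i t - fm i t
        = (ρp - ρm)
          + (fp i 0 - fm i 0 - (ρp - ρm)
              - (ρp - ρm) * (fp i 0 + fm i 0 - (ρp + ρm)) / (1 - ρ0))
            * Real.exp (-(N:ℝ) * β * ρ0 * t)
          + (ρp - ρm) * (fp i 0 + fm i 0 - (ρp + ρm)) / (1 - ρ0)
            * Real.exp (-(N:ℝ) * β * t)) ∧
    (∀ i, Tendsto (fp i) atTop (nhds ρp) ∧ Tendsto (fm i) atTop (nhds ρm)) := by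
  have hN0 : (N:ℝ) ≠ 0 := Nat.cast_ne_zero.mpr (by omega)
  have hNpos : (0:ℝ) < N := by positivity
  have hspos : (0:ℝ) < 1 - ρ0 := by
    have := hρp.1; have := hρm.1; rw [hρ0]; linarith
  have hne : (1:ℝ) - ρ0 ≠ 0 := ne_of_gt hspos
  -- Part 1 : reduction of the derivative
  have part1 : ∀ i, ∀ t ≥ (0:ℝ),
      HasDerivAt (fp i) ((N:ℝ) * β * (ρp * f0 i t - ρ0 * fp i t)) t ∧
      HasDerivAt (fm i) ((N:ℝ) * β * (ρm * f0 i t - ρ0 * fm i t)) t := by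
    intro i t ht
    have hSp : ∑ j, fp j t = (N:ℝ) * ρp := by
      have h := hconsp t ht; field_simp at h; linarith
    have hSm : ∑ j, fm j t = (N:ℝ) * ρm := by
      have h := hconsm t ht; field_simp at h; linarith
    have hS0 : ∑ j, f0 j t = (N:ℝ) * ρ0 := by
      simp only [hf0]
      rw [Finset.sum_sub_distrib, Finset.sum_sub_distrib, hSp, hSm,
        Finset.sum_const, card_univ, Fintype.card_fin, nsmul_eq_mul, mul_one, hρ0]
      ring
    have e1 : ∑ j ∈ univ.erase i, β * fp j t = β * ((N:ℝ) * ρp - fp i t) := by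
      rw [← Finset.mul_sum, Finset.sum_erase_eq_sub (mem_univ i), hSp]
    have e2 : ∑ j ∈ univ.erase i, β * fm j t = β * ((N:ℝ) * ρm - fm i t) := by
      rw [← Finset.mul_sum, Finset.sum_erase_eq_sub (mem_univ i), hSm]
    have e3 : ∑ j ∈ univ.erase i, f0 j t = (N:ℝ) * ρ0 - f0 i t := by
      rw [Finset.sum_erase_eq_sub (mem_univ i), hS0]
    constructor
    · have h := hp i t ht
      rw [e1, e3] at h
      convert h using 1; ring
    · have h := hm i t ht
      rw [e2, e3] at h
      convert h using 1; ring
  -- Part 2a : explicit solution for h = fp + fm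
  have key_h : ∀ i, ∀ t ≥ (0:ℝ),
      fp i t + fm i t
        = ρp + ρm + (fp i 0 + fm i 0 - (ρp + ρm)) * Real.exp (-(N:ℝ) * β * t) := by
    intro i
    have hF : ∀ t ≥ (0:ℝ), HasDerivAt
        (fun s => (fp i s + fm i s - (ρp + ρm)) * Real.exp ((N:ℝ) * β * s)) 0 t := by
      intro t ht
      obtain ⟨d1, d2⟩ := part1 i t ht
      have := ((d1.add d2).sub_const (ρp + ρm)).mul (expDeriv' ((N:ℝ) * β) t)
      refine this.congr_deriv (Eq.symm ?_)
      simp only [Pi.add_apply, Pi.sub_apply]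
      rw [hf0 i t, hρ0]; ring
    intro t ht
    have h1 := const_of_deriv0' _ hF t ht
    simp only [mul_zero, Real.exp_zero, mul_one] at h1
    have hE : Real.exp ((N:ℝ) * β * t) ≠ 0 := (Real.exp_pos _).ne'
    have hexp : Real.exp (-(N:ℝ) * β * t) = (Real.exp ((N:ℝ) * β * t))⁻¹ := by
      rw [← Real.exp_neg]; congr 1; ring
    rw [hexp]
    field_simp
    linear_combination h1
  -- Part 2b : explicit solution for g = fp - fm
  have key_g : ∀ i, ∀ t ≥ (0:ℝ),
      fp i t - fm i t
        = (ρp - ρm)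
          + (fp i 0 - fm i 0 - (ρp - ρm)
              - (ρp - ρm) * (fp i 0 + fm i 0 - (ρp + ρm)) / (1 - ρ0))
            * Real.exp (-(N:ℝ) * β * ρ0 * t)
          + (ρp - ρm) * (fp i 0 + fm i 0 - (ρp + ρm)) / (1 - ρ0)
            * Real.exp (-(N:ℝ) * β * t) := by
    intro i
    set B := (ρp - ρm) * (fp i 0 + fm i 0 - (ρp + ρm)) / (1 - ρ0) with hB
    have hBeq : B * (1 - ρ0) = (ρp - ρm) * (fp i 0 + fm i 0 - (ρp + ρm)) := by
      rw [hB]; field_simp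
    have hF : ∀ t ≥ (0:ℝ), HasDerivAt
        (fun s => (fp i s - fm i s - (ρp - ρm) - B * Real.exp (-(N:ℝ) * β * s))
          * Real.exp ((N:ℝ) * β * ρ0 * s)) 0 t := by
      intro t ht
      obtain ⟨d1, d2⟩ := part1 i t ht
      have dE := expDeriv' (-(N:ℝ) * β) t
      have := ((((d1.sub d2).sub_const (ρp - ρm)).sub (dE.const_mul B)).mul
        (expDeriv' ((N:ℝ) * β * ρ0) t))
      refine this.congr_deriv (Eq.symm ?_)
      simp only [Pi.add_apply, Pi.sub_apply]
      have H := key_h i t ht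
      rw [hf0 i t]
      set E2 := Real.exp ((N:ℝ) * β * ρ0 * t) with hE2
      set E1 := Real.exp (-(N:ℝ) * β * t) with hE1
      linear_combination
        ((N:ℝ) * β * E2 * (ρp - ρm)) * H
        + ((N:ℝ) * β * E2 * (ρp - ρm)) * hρ0
        - ((N:ℝ) * β * E2 * E1) * hBeq
    intro t ht
    have h1 := const_of_deriv0' _ hF t ht
    simp only [mul_zero, Real.exp_zero, mul_one] at h1
    have hE : Real.exp ((N:ℝ) * β * ρ0 * t) ≠ 0 := (Real.exp_pos _).ne'
    have hexp : Real.exp (-(N:ℝ) * β * ρ0 * t) = (Real.exp ((N:ℝ) * β * ρ0 * t))⁻¹ := by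
      rw [← Real.exp_neg]; congr 1; ring
    rw [hexp]
    set E2 := Real.exp ((N:ℝ) * β * ρ0 * t) with hE2
    set E1 := Real.exp (-(N:ℝ) * β * t) with hE1
    field_simp
    linear_combination h1
  -- Part 3 : convergence
  have l1 : Tendsto (fun t => Real.exp (-(N:ℝ) * β * t)) atTop (nhds 0) := by
    rw [Real.tendsto_exp_comp_nhds_zero]
    have hr : -(N:ℝ) * β < 0 := by nlinarith
    exact (tendsto_const_mul_atBot_of_neg hr).mpr tendsto_id
  have l2 : Tendsto (fun t => Real.exp (-(N:ℝ) * β * ρ0 * t)) atTop (nhds 0) := by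
    rw [Real.tendsto_exp_comp_nhds_zero]
    have hr : -(N:ℝ) * β * ρ0 < 0 := by nlinarith [mul_pos (mul_pos hNpos hβ) hρ0pos]
    exact (tendsto_const_mul_atBot_of_neg hr).mpr tendsto_id
  refine ⟨part1, fun i t ht => ⟨key_h i t ht, key_g i t ht⟩, fun i => ?_⟩
  set C1 := fp i 0 + fm i 0 - (ρp + ρm) with hC1
  set B := (ρp - ρm) * C1 / (1 - ρ0) with hB
  set A := fp i 0 - fm i 0 - (ρp - ρm) - B with hA
  have Th : Tendsto (fun t => (ρp + ρm + C1 * Real.exp (-(N:ℝ) * β * t)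
      + ((ρp - ρm) + A * Real.exp (-(N:ℝ) * β * ρ0 * t)
        + B * Real.exp (-(N:ℝ) * β * t))) / 2) atTop
      (nhds ((ρp + ρm + C1 * 0 + ((ρp - ρm) + A * 0 + B * 0)) / 2)) :=
    (((tendsto_const_nhds.add (l1.const_mul C1)).add
      ((tendsto_const_nhds.add (l2.const_mul A)).add (l1.const_mul B))).div_const 2)
  have Tg : Tendsto (fun t => (ρp + ρm + C1 * Real.exp (-(N:ℝ) * β * t)
      - ((ρp - ρm) + A * Real.exp (-(N:ℝ) * β * ρ0 * t)
        + B * Real.exp (-(N:ℝ) * β * t))) / 2) atTop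
      (nhds ((ρp + ρm + C1 * 0 - ((ρp - ρm) + A * 0 + B * 0)) / 2)) :=
    (((tendsto_const_nhds.add (l1.const_mul C1)).sub
      ((tendsto_const_nhds.add (l2.const_mul A)).add (l1.const_mul B))).div_const 2)
  constructor
  · refine Tendsto.congr' ?_ (by convert Th using 2; ring)
    filter_upwards [eventually_ge_atTop (0:ℝ)] with t ht
    have h1 := key_h i t ht
    have h2 := key_g i t ht
    rw [hA, hB, hC1]
    linarith [h1, h2]
  · refine Tendsto.congr' ?_ (by convert Tg using 2; ring)
    filter_upwards [eventually_ge_atTop (0:ℝ)] with t ht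
    have h1 := key_h i t ht
    have h2 := key_g i t ht
    rw [hA, hB, hC1]
    linarith [h1, h2]
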